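/- Let d ∈ {2,3}. Let (h_n) ⊂ (0,1) with h_n → 0⁺ and h_n^{−2} ∉ {λ_ℓ² : ℓ ∈ ℕ} for all n (so σ_n := σ(h_n) ∈ (0,1)); write ℓ_n := ℓ(h_n). Assume (β_n) = ((β_{n,+}, β_{n,−})) ⊂ ℂ² converges, that ρ := (−1)^{ℓ_n} is constant in n, that σ_n → σ ∈ {0,1}, and that |β_{n,+} + (−1)^σ ρ β_{n,−}|/|σ − σ_n| → ∞. Then there exist C > 1 and ν ∈ ℕ such that for all n ≥ ν: (i) the sum over integers k with k ≥ −ℓ_n and k ≠ σ of |β_{n,+} + (−1)^{ℓ_n+k} β_{n,−}|² · m_{ℓ_n+k}/(λ_{ℓ_n+k}² − h_n^{−2})² is at most C h_n^{3−d}; and (ii) ||β_{n,+} + (−1)^σ ρ β_{n,−}|² · m_{ℓ_n+σ}/(λ_{ℓ_n+σ}² − h_n^{−2})² − h_n^{3−d} |β_{n,+} + (−1)^σ ρ β_{n,−}|²/(2(d−1)(σ − σ_n)²)| ≤ C h_n^{4−d} |β_{n,+} + (−1)^σ ρ β_{n,−}|²/(σ − σ_n)². -/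

import Mathlib

open Filter

/-- The squared Laplace eigenvalue `λ_ℓ² = ℓ(ℓ+d−1)` on `S^d`, extended to integer index. -/
noncomputable def lam2 (d : ℕ) (l : ℤ) : ℝ := (l : ℝ) * ((l : ℝ) + (d : ℝ) - 1)

/-- The multiplicity `m_ℓ` (`2ℓ+1` if `d = 2`, `(ℓ+1)²` if `d = 3`), extended to integer
index. -/
noncomputable def mult (d : ℕ) (l : ℤ) : ℝ :=
  if d = 2 then 2 * (l : ℝ) + 1 else ((l : ℝ) + 1) ^ 2


lemma basel_int : Summable (fun k : ℤ => 1/((k:ℝ))^2) ∧ (∑' k : ℤ, 1/((k:ℝ))^2) ≤ 4 := by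
  have hnat : HasSum (fun n : ℕ => (1:ℝ)/(n:ℝ)^2) (Real.pi^2/6) := hasSum_zeta_two
  have hshift : HasSum (fun n : ℕ => (1:ℝ)/((n:ℝ)+1)^2) (Real.pi^2/6) := by
    have := (hasSum_nat_add_iff' (f := fun n : ℕ => (1:ℝ)/(n:ℝ)^2) 1).mpr hnat
    simp only [Finset.range_one, Finset.sum_singleton, Nat.cast_zero] at this
    norm_num at this
    refine this.congr_fun fun n => by push_cast; ring_nf
  have hneg : HasSum (fun n : ℕ => (fun k : ℤ => 1/((k:ℝ))^2) (-((n:ℕ)+1))) (Real.pi^2/6) := by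
    refine hshift.congr_fun fun n => ?_
    push_cast; ring_nf
  have hZ : HasSum (fun k : ℤ => 1/((k:ℝ))^2) (Real.pi^2/6 + Real.pi^2/6) :=
    HasSum.of_nat_of_neg_add_one hnat hneg
  refine ⟨hZ.summable, ?_⟩
  rw [hZ.tsum_eq]
  nlinarith [Real.pi_lt_d2, Real.pi_pos]

lemma basel_shift (c : ℤ) : Summable (fun k : ℤ => 1/(((k:ℝ)) - (c:ℝ))^2) ∧
    (∑' k : ℤ, 1/(((k:ℝ)) - (c:ℝ))^2) ≤ 4 := by
  have key : ∀ k : ℤ, (fun k : ℤ => 1/(((k:ℝ)) - (c:ℝ))^2) ((Equiv.addRight c) k)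
      = 1/((k:ℝ))^2 := by
    intro k; simp only [Equiv.coe_addRight]; push_cast; ring_nf
  have hs : Summable (fun k : ℤ => 1/(((k:ℝ)) - (c:ℝ))^2) := by
    rw [← (Equiv.addRight c).summable_iff]
    exact basel_int.1.congr fun k => (key k).symm
  refine ⟨hs, ?_⟩
  have := (Equiv.addRight c).tsum_eq (fun k : ℤ => 1/(((k:ℝ)) - (c:ℝ))^2)
  rw [← this]
  calc (∑' k : ℤ, (fun k : ℤ => 1/(((k:ℝ)) - (c:ℝ))^2) ((Equiv.addRight c) k))
      = ∑' k : ℤ, 1/((k:ℝ))^2 := tsum_congr key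
    _ ≤ 4 := basel_int.2

/-- Comparison of a nonneg function on a subtype of `ℤ` with `c/(k-σ)²`. -/
lemma aux_sum {α : Type*} (i : α → ℤ) (hi : Function.Injective i) (c : ℝ) (hc : 0 ≤ c)
    (σ' : ℤ) (f : α → ℝ) (h0 : ∀ a, 0 ≤ f a)
    (hle : ∀ a, f a ≤ c * (1/(((i a):ℝ) - (σ':ℝ))^2)) :
    Summable f ∧ (∑' a, f a) ≤ 4 * c := by
  have hg : Summable (fun k : ℤ => c * (1/(((k:ℝ)) - (σ':ℝ))^2)) :=
    (basel_shift σ').1.mul_left c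
  have hf : Summable f :=
    Summable.of_nonneg_of_le h0 hle (hg.comp_injective hi)
  refine ⟨hf, ?_⟩
  have h1 : (∑' a, f a) ≤ ∑' k : ℤ, c * (1/(((k:ℝ)) - (σ':ℝ))^2) :=
    Summable.tsum_le_tsum_of_inj i hi
      (fun k _ => by positivity) hle hf hg
  have h2 : (∑' k : ℤ, c * (1/(((k:ℝ)) - (σ':ℝ))^2)) = c * ∑' k : ℤ, 1/(((k:ℝ)) - (σ':ℝ))^2 :=
    tsum_mul_left
  calc (∑' a, f a) ≤ c * ∑' k : ℤ, 1/(((k:ℝ)) - (σ':ℝ))^2 := by rw [← h2]; exact h1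
    _ ≤ c * 4 := by
        exact mul_le_mul_of_nonneg_left (basel_shift σ').2 hc
    _ = 4 * c := by ring


lemma ks_bound (K S sr : ℝ) (h1 : 1 ≤ |K - S|) (h2 : |sr - S| ≤ 1/4) :
    (9/16) * (K-S)^2 ≤ (K-sr)^2 := by
  have h3 : |K - S| ≤ |K - sr| + |sr - S| := abs_sub_le K sr S
  nlinarith [sq_abs (K-S), sq_abs (K-sr), abs_nonneg (K-sr), abs_nonneg (K-S)]

/-- pointwise bound, d = 3 -/
lemma ptwise3 (B nm lr K S sr : ℝ) (hB1 : 1 ≤ B) (hnm0 : 0 ≤ nm) (hnm : nm ≤ 4*B^2)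
    (hl2 : 2 ≤ lr) (hu : -lr ≤ K) (hs0 : 0 < sr) (hs1 : sr < 1)
    (hKS2 : 1 ≤ (K-S)^2) (hks : (9/16)*(K-S)^2 ≤ (K-sr)^2) :
    nm * (lr+K+1)^2 / ((K-sr)*(2*lr+K+sr+2))^2 ≤ (8*B^2) * (1/(K-S)^2) := by
  have hy1 : lr + K + 1 ≤ 2*lr + K + sr + 2 := by linarith
  have hy0 : (0:ℝ) < 2*lr + K + sr + 2 := by linarith
  have hu0 : (0:ℝ) ≤ lr + K + 1 := by linarith
  have hKs2 : 0 < (K-sr)^2 := by nlinarith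
  have hd1 : 0 < ((K-sr) * (2*lr+K+sr+2))^2 := by
    rw [mul_pow]; exact mul_pos hKs2 (by positivity)
  have hd2 : (0:ℝ) < (K-S)^2 := by linarith
  rw [mul_one_div, div_le_div_iff₀ hd1 hd2]
  have hy2 : (lr+K+1)^2 ≤ (2*lr+K+sr+2)^2 := by nlinarith
  calc nm * (lr+K+1)^2 * (K-S)^2
      ≤ (4*B^2) * (lr+K+1)^2 * (K-S)^2 := by
        rw [mul_assoc, mul_assoc]
        exact mul_le_mul_of_nonneg_right hnm
          (mul_nonneg (sq_nonneg _) (sq_nonneg _))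
    _ ≤ (4*B^2) * (2*lr+K+sr+2)^2 * (K-S)^2 := by
        apply mul_le_mul_of_nonneg_right _ (le_of_lt hd2)
        exact mul_le_mul_of_nonneg_left hy2 (by positivity)
    _ ≤ 8*B^2 * ((K-sr) * (2*lr+K+sr+2))^2 := by
        rw [mul_pow]
        nlinarith [hks, mul_nonneg (sq_nonneg B) (sq_nonneg (2*lr+K+sr+2)),
          sq_nonneg (2*lr+K+sr+2)]

/-- pointwise bound, d = 2 -/
lemma ptwise2 (B nm lr K S sr : ℝ) (hB1 : 1 ≤ B) (hnm0 : 0 ≤ nm) (hnm : nm ≤ 4*B^2)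
    (hl2 : 2 ≤ lr) (hu : -lr ≤ K) (hs0 : 0 < sr) (hs1 : sr < 1)
    (hKS2 : 1 ≤ (K-S)^2) (hks : (9/16)*(K-S)^2 ≤ (K-sr)^2) :
    nm * (2*(lr+K)+1) / ((K-sr)*(2*lr+K+sr+1))^2 ≤ (15*B^2/(lr+1)) * (1/(K-S)^2) := by
  have hy1 : lr + K + 1 ≤ 2*lr + K + sr + 1 := by linarith
  have hy2 : lr + 1 ≤ 2*lr + K + sr + 1 := by linarith
  have hy0 : (0:ℝ) < 2*lr + K + sr + 1 := by linarith
  have hu0 : (0:ℝ) ≤ lr + K + 1 := by linarith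
  have hm0 : (0:ℝ) ≤ 2*(lr+K)+1 := by linarith
  have hKs2 : 0 < (K-sr)^2 := by nlinarith
  have hd1 : 0 < ((K-sr) * (2*lr+K+sr+1))^2 := by
    rw [mul_pow]; exact mul_pos hKs2 (by positivity)
  have hd2 : (0:ℝ) < (K-S)^2 := by linarith
  have hr : (15*B^2/(lr+1)) * (1/(K-S)^2) = (15*B^2)/((lr+1)*(K-S)^2) := by
    rw [div_mul_div_comm, mul_one]
  rw [hr, div_le_div_iff₀ hd1 (by positivity)]
  have hyy : (lr+K+1)*(lr+1) ≤ (2*lr+K+sr+1)*(2*lr+K+sr+1) :=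
    mul_le_mul hy1 hy2 (by linarith) (by linarith)
  have h169 : (K-S)^2 ≤ (16/9)*(K-sr)^2 := by linarith
  calc nm * (2*(lr+K)+1) * ((lr+1)*(K-S)^2)
      ≤ (4*B^2) * ((2*(lr+K)+1) * ((lr+1)*(K-S)^2)) := by
        rw [mul_assoc]
        exact mul_le_mul_of_nonneg_right hnm
          (mul_nonneg hm0 (mul_nonneg (by linarith) (le_of_lt hd2)))
    _ = (4*B^2) * ((2*(lr+K)+1) * (lr+1)) * (K-S)^2 := by ring
    _ ≤ (4*B^2) * (2*((2*lr+K+sr+1)*(2*lr+K+sr+1))) * (K-S)^2 := by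
        apply mul_le_mul_of_nonneg_right _ (le_of_lt hd2)
        apply mul_le_mul_of_nonneg_left _ (by positivity)
        nlinarith [hyy]
    _ = (8*B^2) * ((2*lr+K+sr+1)*(2*lr+K+sr+1)) * (K-S)^2 := by ring
    _ ≤ (8*B^2) * ((2*lr+K+sr+1)*(2*lr+K+sr+1)) * ((16/9)*(K-sr)^2) := by
        apply mul_le_mul_of_nonneg_left h169
        positivity
    _ ≤ 15*B^2 * ((K-sr) * (2*lr+K+sr+1))^2 := by
        rw [mul_pow]
        nlinarith [mul_nonneg (mul_nonneg (sq_nonneg B) (sq_nonneg (K-sr)))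
          (sq_nonneg (2*lr+K+sr+1))]


/-- central term estimate, d = 3 -/
lemma key3 (w δ hh : ℝ) (hw3 : 3 ≤ w) (hδ : |δ| ≤ 1/4) (hh0 : 0 < hh)
    (hwh : 1 ≤ hh*(w+2)) : |w^2/(2*w-δ)^2 - 1/4| ≤ 3*hh := by
  have hδa : -(1/4) ≤ δ ∧ δ ≤ 1/4 := abs_le.mp hδ
  have h2w : 0 < 2*w - δ := by linarith [hδa.2]
  have e1 : w^2/(2*w-δ)^2 - 1/4 = δ*(4*w-δ)/(4*(2*w-δ)^2) := by
    rw [div_sub_div _ _ (pow_ne_zero 2 h2w.ne') (by norm_num),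
      div_eq_div_iff (mul_ne_zero (pow_ne_zero 2 h2w.ne') (by norm_num))
        (mul_ne_zero (by norm_num) (pow_ne_zero 2 h2w.ne'))]
    ring
  rw [e1, abs_div, abs_of_pos (show (0:ℝ) < 4*(2*w-δ)^2 by positivity),
    div_le_iff₀ (show (0:ℝ) < 4*(2*w-δ)^2 by positivity)]
  have habs : |δ*(4*w-δ)| ≤ w + 1 := by
    rw [abs_mul]
    have h4 : |4*w-δ| ≤ 4*w + 1/4 := by
      rw [abs_le]; constructor <;> nlinarith [hδa.1, hδa.2, hw3]
    nlinarith [abs_nonneg δ, abs_nonneg (4*w-δ),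
      mul_le_mul hδ h4 (abs_nonneg _) (by norm_num)]
  have q : (w+1)*(w+2) ≤ 12*(2*w-δ)^2 := by nlinarith [hδa.1, hδa.2, hw3]
  have r1 : 12*(2*w-δ)^2 ≤ 12 * hh * (2*w-δ)^2 * (w+2) := by
    nlinarith [hwh, sq_nonneg (2*w-δ)]
  have r2 : (w+1)*(w+2) ≤ (12 * hh * (2*w-δ)^2) * (w+2) := by
    calc (w+1)*(w+2) ≤ 12*(2*w-δ)^2 := q
      _ ≤ (12 * hh * (2*w-δ)^2) * (w+2) := by linarith [r1]
  have r3 : w + 1 ≤ 12 * hh * (2*w-δ)^2 :=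
    le_of_mul_le_mul_right r2 (by linarith : (0:ℝ) < w + 2)
  calc |δ*(4*w-δ)| ≤ w + 1 := habs
    _ ≤ 3 * hh * (4*(2*w-δ)^2) := by linarith [r3]

set_option maxHeartbeats 1600000 in
/-- central term estimate, d = 2 -/
lemma key2 (t δ hh : ℝ) (ht5 : 5 ≤ t) (hδ : |δ| ≤ 1/4) (hh0 : 0 < hh)
    (hh2 : hh^2*(t^2-1) = 4) : |(t+2*δ)/(t+δ)^2 - hh/2| ≤ 10*hh^2 := by
  have hδa : -(1/4) ≤ δ ∧ δ ≤ 1/4 := abs_le.mp hδ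
  have htδ : 0 < t + δ := by linarith [hδa.1]
  have ht21 : (0:ℝ) < t^2 - 1 := by nlinarith
  set a := (t+2*δ)/(t+δ)^2 with hadef
  set bb := hh / 2 with hbdef
  have ha : 1/(3*t) ≤ a := by
    rw [hadef, div_le_div_iff₀ (by linarith) (by positivity)]
    nlinarith [hδa.1, hδa.2]
  have ha0 : 0 < a := lt_of_lt_of_le (by positivity) ha
  have hb0 : 0 < bb := by rw [hbdef]; positivity
  have habs : |a - bb| * (a + bb) = |a^2 - bb^2| := by
    rw [← abs_of_pos (show (0:ℝ) < a + bb by linarith), ← abs_mul]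
    congr 1; ring
  have hb2 : bb^2 = 1/(t^2-1) := by
    rw [hbdef, eq_div_iff (ne_of_gt ht21)]
    linear_combination hh2 / 4
  have hN : a^2 - bb^2
      = (-( (1+2*δ^2)*t^2 + 4*δ*(1+δ^2)*t + (δ^4+4*δ^2) )) / ((t+δ)^4*(t^2-1)) := by
    rw [hadef, hb2]
    field_simp
    ring
  have hNabs : |a^2 - bb^2| ≤ 5*t^2 / ((t+δ)^4*(t^2-1)) := by
    rw [hN, abs_div, abs_of_pos (show (0:ℝ) < (t+δ)^4*(t^2-1) by positivity)]
    gcongr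
    have hδ2 : δ^2 ≤ 1/16 := by nlinarith [hδa.1, hδa.2]
    have hδ4' : δ^4 ≤ 1/256 := by nlinarith [hδ2, sq_nonneg (δ^2)]
    have hδt1 : δ*t ≤ t/4 := by nlinarith [hδa.2, ht5]
    have hδt2 : -(t/4) ≤ δ*t := by nlinarith [hδa.1, ht5]
    have h3a : δ^3*t ≤ t/64 := by nlinarith [hδt1, hδt2, hδ2, sq_nonneg δ, ht5]
    have h3b : -(t/64) ≤ δ^3*t := by nlinarith [hδt1, hδt2, hδ2, sq_nonneg δ, ht5]
    rw [abs_le]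
    constructor <;>
      nlinarith [hδ2, hδ4', hδt1, hδt2, h3a, h3b, ht5, sq_nonneg t, sq_nonneg δ]
  have hfrac : 5*t^2 / ((t+δ)^4*(t^2-1)) ≤ 13/(t*(t^2-1)) := by
    rw [div_le_div_iff₀ (by positivity) (by positivity)]
    have hp : (19/20)*t ≤ t + δ := by linarith [hδa.1]
    have hp0 : (0:ℝ) ≤ (19/20)*t := by linarith
    have p1 : ((19/20)*t)^2 ≤ (t+δ)^2 := by nlinarith [hp, hp0]
    have p2 : (((19/20)*t)^2)^2 ≤ ((t+δ)^2)^2 := by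
      nlinarith [p1, sq_nonneg ((19/20)*t), sq_nonneg (t+δ)]
    have ht3 : 125 ≤ t^3 := by nlinarith [ht5, sq_nonneg (t+5/2), sq_nonneg (t-5)]
    have p3 : 5*t^3 ≤ 13*(t+δ)^4 := by nlinarith [p2, ht5, ht3]
    nlinarith [p3, ht21]
  have hsum3 : |a - bb| * (1/(3*t)) ≤ 13/(t*(t^2-1)) := by
    calc |a-bb| * (1/(3*t)) ≤ |a-bb| * (a+bb) := by
          apply mul_le_mul_of_nonneg_left _ (abs_nonneg _)
          linarith [ha, hb0]
      _ = |a^2-bb^2| := habs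
      _ ≤ 5*t^2/((t+δ)^4*(t^2-1)) := hNabs
      _ ≤ 13/(t*(t^2-1)) := hfrac
  have e4 : |a-bb| ≤ 39/(t^2-1) := by
    have h5 := mul_le_mul_of_nonneg_right hsum3 (show (0:ℝ) ≤ 3*t by linarith)
    have e3 : 13/(t*(t^2-1)) * (3*t) = 39/(t^2-1) := by field_simp; ring
    have e5 : |a-bb| * (1/(3*t)) * (3*t) = |a-bb| := by field_simp
    rw [e3, e5] at h5
    exact h5
  have h10 : 10*hh^2 = 40/(t^2-1) := by
    rw [eq_div_iff (ne_of_gt ht21)]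
    linear_combination 10*hh2
  rw [h10]
  calc |a-bb| ≤ 39/(t^2-1) := e4
    _ ≤ 40/(t^2-1) := by gcongr <;> norm_num

set_option maxHeartbeats 2000000 in
/-- Scenario 2: with `σ_n → σ ∈ {0,1}` and
`|β_{n,+} + (−1)^σ ρ β_{n,−}|/|σ − σ_n| → ∞`, (i) the sum over `k ≥ −ℓ_n`, `k ≠ σ` of
the window terms is `≤ C h_n^{3−d}`, and (ii) the `k = σ` term matches
`h_n^{3−d} |β_{n,+} + (−1)^σ ρ β_{n,−}|²/(2(d−1)(σ−σ_n)²)` up to the stated error. -/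
theorem stmt_7 (d : ℕ) (hd : d = 2 ∨ d = 3)
    (h : ℕ → ℝ) (hh : ∀ n, h n ∈ Set.Ioo (0 : ℝ) 1)
    (hto : Tendsto h atTop (nhds 0))
    (hspec : ∀ n, ∀ l : ℕ, (h n) ^ (-2 : ℤ) ≠ lam2 d (l : ℤ))
    (L : ℕ → ℕ) (s : ℕ → ℝ) (hs : ∀ n, s n ∈ Set.Ico (0 : ℝ) 1)
    (heq : ∀ n, (h n) ^ (-2 : ℤ) =
      ((L n : ℝ) + s n) * ((L n : ℝ) + s n + (d : ℝ) - 1))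
    (β : ℕ → ℂ × ℂ) (hβ : ∃ b : ℂ × ℂ, Tendsto β atTop (nhds b))
    (ρ : ℂ) (hρ : ∀ n, ρ = (-1 : ℂ) ^ (L n))
    (σ : ℕ) (hσ : σ = 0 ∨ σ = 1)
    (hsto : Tendsto s atTop (nhds (σ : ℝ)))
    (hinf : Tendsto
      (fun n => ‖(β n).1 + (-1 : ℂ) ^ σ * ρ * (β n).2‖ / |(σ : ℝ) - s n|)
      atTop atTop) :
    ∃ C : ℝ, 1 < C ∧ ∃ ν : ℕ, ∀ n ≥ ν,
      (Summable (fun k : {k : ℤ // -(L n : ℤ) ≤ k ∧ k ≠ (σ : ℤ)} =>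
          ‖(β n).1 + (-1 : ℂ) ^ ((L n : ℤ) + (k : ℤ)) * (β n).2‖ ^ 2 *
            mult d ((L n : ℤ) + (k : ℤ)) /
              (lam2 d ((L n : ℤ) + (k : ℤ)) - (h n) ^ (-2 : ℤ)) ^ 2) ∧
        (∑' k : {k : ℤ // -(L n : ℤ) ≤ k ∧ k ≠ (σ : ℤ)},
          ‖(β n).1 + (-1 : ℂ) ^ ((L n : ℤ) + (k : ℤ)) * (β n).2‖ ^ 2 *
            mult d ((L n : ℤ) + (k : ℤ)) /
              (lam2 d ((L n : ℤ) + (k : ℤ)) - (h n) ^ (-2 : ℤ)) ^ 2)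
          ≤ C * (h n) ^ ((3 : ℤ) - (d : ℤ))) ∧
      |‖(β n).1 + (-1 : ℂ) ^ σ * ρ * (β n).2‖ ^ 2 *
          mult d ((L n : ℤ) + (σ : ℤ)) /
            (lam2 d ((L n : ℤ) + (σ : ℤ)) - (h n) ^ (-2 : ℤ)) ^ 2
        - (h n) ^ ((3 : ℤ) - (d : ℤ)) *
            ‖(β n).1 + (-1 : ℂ) ^ σ * ρ * (β n).2‖ ^ 2 /
              (2 * ((d : ℝ) - 1) * ((σ : ℝ) - s n) ^ 2)|
        ≤ C * (h n) ^ ((4 : ℤ) - (d : ℤ)) *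
            ‖(β n).1 + (-1 : ℂ) ^ σ * ρ * (β n).2‖ ^ 2 / ((σ : ℝ) - s n) ^ 2 := by
  obtain ⟨b, hb⟩ := hβ
  set B : ℝ := ‖b‖ + 1 with hB
  have hB1 : 1 ≤ B := by
    have := norm_nonneg b; rw [hB]; linarith
  refine ⟨200 * B^2 + 200, by nlinarith, ?_⟩
  obtain ⟨N1, hN1⟩ := (Metric.tendsto_atTop.mp hb) 1 one_pos
  obtain ⟨N2, hN2⟩ := (Metric.tendsto_atTop.mp hsto) (1/4) (by norm_num)
  obtain ⟨N3, hN3⟩ := (Metric.tendsto_atTop.mp hto) (1/6) (by norm_num)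
  refine ⟨max N1 (max N2 N3), fun n hn => ?_⟩
  have hn1 : N1 ≤ n := le_trans (le_max_left _ _) hn
  have hn2 : N2 ≤ n := le_trans (le_max_left _ _) (le_trans (le_max_right _ _) hn)
  have hn3 : N3 ≤ n := le_trans (le_max_right _ _) (le_trans (le_max_right _ _) hn)
  have hd2 : (2:ℝ) ≤ (d:ℝ) := by rcases hd with rfl | rfl <;> norm_num
  have hd3 : (d:ℝ) ≤ 3 := by rcases hd with rfl | rfl <;> norm_num
  have hβn : ‖β n - b‖ < 1 := by
    have := hN1 n hn1; rwa [dist_eq_norm] at this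
  have hβ1 : ‖(β n).1‖ ≤ B ∧ ‖(β n).2‖ ≤ B := by
    constructor
    · calc ‖(β n).1‖ = ‖(β n - b).1 + b.1‖ := by simp
        _ ≤ ‖(β n - b).1‖ + ‖b.1‖ := norm_add_le _ _
        _ ≤ ‖β n - b‖ + ‖b‖ := add_le_add (norm_fst_le _) (norm_fst_le _)
        _ ≤ B := by rw [hB]; linarith
    · calc ‖(β n).2‖ = ‖(β n - b).2 + b.2‖ := by simp
        _ ≤ ‖(β n - b).2‖ + ‖b.2‖ := norm_add_le _ _
        _ ≤ ‖β n - b‖ + ‖b‖ := add_le_add (norm_snd_le _) (norm_snd_le _)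
        _ ≤ B := by rw [hB]; linarith
  clear_value B
  have hs4 : |s n - (σ:ℝ)| ≤ 1/4 := by
    have := hN2 n hn2; rw [Real.dist_eq] at this; linarith [le_of_lt this]
  have hh6 : h n < 1/6 := by
    have := hN3 n hn3; rw [Real.dist_eq, sub_zero, abs_of_pos (hh n).1] at this; exact this
  have hh0 : 0 < h n := (hh n).1
  have hs0 : 0 < s n := by
    rcases lt_or_eq_of_le (hs n).1 with h' | h'
    · exact h'
    · exfalso
      refine hspec n (L n) ?_
      rw [heq n, ← h']
      unfold lam2; push_cast; ring
  have hs1 : s n < 1 := (hs n).2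
  have hX : (h n)^2 * (((L n : ℝ) + s n) * ((L n : ℝ) + s n + (d : ℝ) - 1)) = 1 := by
    have h1 : (h n) ^ (-2 : ℤ) = ((h n)^2)⁻¹ := by
      rw [zpow_neg, zpow_two, sq]
    have h2 := heq n
    rw [h1] at h2
    have h3 : ((L n : ℝ) + s n) * ((L n : ℝ) + s n + (d : ℝ) - 1) = ((h n)^2)⁻¹ := h2.symm
    rw [h3]
    exact mul_inv_cancel₀ (pow_ne_zero 2 (ne_of_gt hh0))
  have hL2 : (2:ℝ) ≤ (L n : ℝ) := by
    by_contra hc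
    push_neg at hc
    have hl1 : (L n : ℝ) ≤ 1 := by
      have h4 : L n < 2 := by exact_mod_cast hc
      have h5 : L n ≤ 1 := by omega
      exact_mod_cast h5
    have hl0 : (0:ℝ) ≤ (L n : ℝ) := Nat.cast_nonneg _
    have hXpos : 0 < ((L n : ℝ) + s n) * ((L n : ℝ) + s n + (d : ℝ) - 1) := by
      have h6 : 0 < (L n : ℝ) + s n := by linarith
      have h7 : 0 < (L n : ℝ) + s n + (d : ℝ) - 1 := by linarith
      positivity
    have hx8 : ((L n : ℝ) + s n) * ((L n : ℝ) + s n + (d : ℝ) - 1) ≤ 8 := by nlinarith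
    have hsq : (h n)^2 < 1/36 := by nlinarith
    nlinarith [hX, hx8, hsq, hXpos]
  have hℓ0 : (0:ℝ) ≤ (L n : ℝ) := Nat.cast_nonneg _
  have hhl : 1 ≤ h n * ((L n : ℝ) + (d:ℝ)) := by
    have hXle : ((L n : ℝ) + s n) * ((L n : ℝ) + s n + (d : ℝ) - 1) ≤ ((L n : ℝ) + (d:ℝ))^2 := by
      nlinarith
    have h1 : (h n)^2 * (((L n : ℝ) + s n) * ((L n : ℝ) + s n + (d : ℝ) - 1))
        ≤ (h n)^2 * ((L n : ℝ) + (d:ℝ))^2 :=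
      mul_le_mul_of_nonneg_left hXle (sq_nonneg (h n))
    rw [hX] at h1
    have h2 : (h n)^2 * ((L n : ℝ) + (d:ℝ))^2 = (h n * ((L n : ℝ) + (d:ℝ)))^2 := by ring
    rw [h2] at h1
    have h3 : 0 < h n * ((L n : ℝ) + (d:ℝ)) := by positivity
    nlinarith [h1, h3]
  have hnum : ∀ m : ℤ, ‖(β n).1 + (-1:ℂ)^m * (β n).2‖^2 ≤ 4*B^2 := by
    intro m
    have h1 : ‖(β n).1 + (-1:ℂ)^m * (β n).2‖ ≤ 2*B := by
      calc ‖(β n).1 + (-1:ℂ)^m * (β n).2‖ ≤ ‖(β n).1‖ + ‖(-1:ℂ)^m * (β n).2‖ :=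
            norm_add_le _ _
        _ = ‖(β n).1‖ + ‖(β n).2‖ := by
            rw [norm_mul, norm_zpow, norm_neg, norm_one, one_zpow, one_mul]
        _ ≤ 2*B := by linarith [hβ1.1, hβ1.2]
    nlinarith [norm_nonneg ((β n).1 + (-1:ℂ)^m * (β n).2), hB1]
  clear hinf hto hsto hb hρ hN1 hN2 hN3 hβn hn1 hn2 hn3 hn
  -- facts for the subtype index
  have hsub : ∀ k : ℤ, -(L n : ℤ) ≤ k → k ≠ (σ : ℤ) →
      (-(L n:ℝ) ≤ (k:ℝ)) ∧ (1 ≤ ((k:ℝ) - ((σ:ℤ):ℝ))^2) ∧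
        ((9/16)*((k:ℝ) - ((σ:ℤ):ℝ))^2 ≤ ((k:ℝ) - s n)^2) := by
    intro k hk1 hk2
    have hu : -(L n : ℝ) ≤ (k : ℝ) := by exact_mod_cast hk1
    have hKS : 1 ≤ |(k:ℝ) - ((σ:ℤ):ℝ)| := by
      have h0 : k - (σ:ℤ) ≠ 0 := sub_ne_zero.mpr hk2
      have h1 := Int.one_le_abs h0
      calc (1:ℝ) ≤ ((|k - (σ:ℤ)| : ℤ) : ℝ) := by exact_mod_cast h1
        _ = |(k:ℝ) - ((σ:ℤ):ℝ)| := by push_cast; try ring_nf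
    have hKS2 : 1 ≤ ((k:ℝ) - ((σ:ℤ):ℝ))^2 := by
      nlinarith [hKS, abs_nonneg ((k:ℝ) - ((σ:ℤ):ℝ)), sq_abs ((k:ℝ) - ((σ:ℤ):ℝ))]
    have hks : (9/16)*((k:ℝ) - ((σ:ℤ):ℝ))^2 ≤ ((k:ℝ) - s n)^2 := by
      apply ks_bound _ _ _ hKS
      push_cast
      exact hs4
    exact ⟨hu, hKS2, hks⟩
  have hδ4 : |((σ:ℕ):ℝ) - s n| ≤ 1/4 := by rw [abs_sub_comm]; exact hs4
  have hδ0 : ((σ:ℕ):ℝ) - s n ≠ 0 := by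
    rcases hσ with rfl | rfl
    · simp only [Nat.cast_zero, zero_sub]; exact neg_ne_zero.mpr (ne_of_gt hs0)
    · simp only [Nat.cast_one]; intro hc; nlinarith [hs1]
  have hσ0 : (0:ℝ) ≤ (σ:ℝ) := Nat.cast_nonneg _
  rcases hd with rfl | rfl
  · -- d = 2
    push_cast at hX hhl
    constructor
    · -- part (i), d = 2
      have key : ∀ a : {k : ℤ // -(L n : ℤ) ≤ k ∧ k ≠ (σ : ℤ)},
          0 ≤ (fun k : {k : ℤ // -(L n : ℤ) ≤ k ∧ k ≠ (σ : ℤ)} =>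
              ‖(β n).1 + (-1 : ℂ) ^ ((L n : ℤ) + (k : ℤ)) * (β n).2‖ ^ 2 *
                mult 2 ((L n : ℤ) + (k : ℤ)) /
                  (lam2 2 ((L n : ℤ) + (k : ℤ)) - (h n) ^ (-2 : ℤ)) ^ 2) a ∧
            (fun k : {k : ℤ // -(L n : ℤ) ≤ k ∧ k ≠ (σ : ℤ)} =>
              ‖(β n).1 + (-1 : ℂ) ^ ((L n : ℤ) + (k : ℤ)) * (β n).2‖ ^ 2 *
                mult 2 ((L n : ℤ) + (k : ℤ)) /
                  (lam2 2 ((L n : ℤ) + (k : ℤ)) - (h n) ^ (-2 : ℤ)) ^ 2) a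
              ≤ (15*B^2/((L n : ℝ)+1)) * (1/(((a : ℤ) : ℝ) - (((σ:ℤ)) : ℝ))^2) := by
        rintro ⟨k, hk1, hk2⟩
        simp only []
        obtain ⟨hu, hKS2, hks⟩ := hsub k hk1 hk2
        have hgap : lam2 2 ((L n : ℤ) + k) - (h n) ^ (-2 : ℤ)
            = ((k:ℝ) - s n) * (2*(L n : ℝ) + (k:ℝ) + s n + 1) := by
          rw [heq n]; unfold lam2; push_cast; ring
        have hm : mult 2 ((L n : ℤ) + k) = 2*((L n : ℝ) + (k:ℝ)) + 1 := by
          simp only [mult, if_pos rfl]; push_cast; ring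
        rw [hgap, hm]
        have hm0 : (0:ℝ) ≤ 2*((L n : ℝ) + (k:ℝ)) + 1 := by linarith
        constructor
        · exact div_nonneg (mul_nonneg (sq_nonneg _) hm0) (sq_nonneg _)
        · exact ptwise2 B _ (L n : ℝ) (k:ℝ) ((σ:ℤ):ℝ) (s n) hB1 (sq_nonneg _)
            (hnum _) hL2 hu hs0 hs1 hKS2 hks
      obtain ⟨hsumm, htsum⟩ := aux_sum (Subtype.val) Subtype.val_injective
        (15*B^2/((L n : ℝ)+1)) (by positivity) (σ:ℤ) _
        (fun a => (key a).1) (fun a => (key a).2)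
      refine ⟨hsumm, le_trans htsum ?_⟩
      have hexp : ((h n) ^ ((3:ℤ) - ((2:ℕ):ℤ))) = h n := by norm_num
      rw [hexp]
      have h56 : 5/6 ≤ h n * ((L n : ℝ)+1) := by nlinarith [hhl, hh6, hh0]
      have hr : 4 * (15*B^2/((L n : ℝ)+1)) = 60*B^2/((L n : ℝ)+1) := by ring
      rw [hr, div_le_iff₀ (by linarith : (0:ℝ) < (L n : ℝ)+1)]
      nlinarith [h56, sq_nonneg B, hB1, mul_le_mul_of_nonneg_left h56
        (show (0:ℝ) ≤ 200*B^2+200 by positivity)]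
    · -- part (ii), d = 2
      set A := ‖(β n).1 + (-1 : ℂ) ^ σ * ρ * (β n).2‖ ^ 2 with hAdef
      have hA0 : 0 ≤ A := sq_nonneg _
      clear_value A
      set δ := ((σ:ℕ) : ℝ) - s n with hδdef
      set t := 2*((L n : ℝ) + s n) + 1 with htdef
      have ht5 : 5 ≤ t := by rw [htdef]; linarith
      have hh2 : (h n)^2 * (t^2 - 1) = 4 := by
        rw [htdef]; linear_combination 4*hX
      have hgapσ : lam2 2 ((L n : ℤ) + (σ:ℤ)) - (h n) ^ (-2 : ℤ) = δ*(t+δ) := by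
        rw [heq n]; unfold lam2; rw [hδdef, htdef]; push_cast; ring
      have hmσ : mult 2 ((L n : ℤ) + (σ:ℤ)) = t + 2*δ := by
        simp only [mult, if_pos rfl]; rw [hδdef, htdef]; push_cast; ring
      clear_value δ t
      have key := key2 t δ (h n) ht5 hδ4 hh0 hh2
      have hδa : -(1/4) ≤ δ ∧ δ ≤ 1/4 := abs_le.mp hδ4
      have htδ : (0:ℝ) < t + δ := by linarith [hδa.1]
      have hexp1 : ((h n) ^ ((3:ℤ) - ((2:ℕ):ℤ))) = h n := by norm_num
      have hexp2 : ((h n) ^ ((4:ℤ) - ((2:ℕ):ℤ))) = (h n)^2 := by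
        rw [show (4:ℤ) - ((2:ℕ):ℤ) = 2 by norm_num, zpow_two, sq]
      rw [hgapσ, hmσ, hexp1, hexp2]
      have hne : t + δ ≠ 0 := ne_of_gt htδ
      have e2 : A * (t+2*δ)/(δ*(t+δ))^2 - (h n) * A/(2*(((2:ℕ):ℝ)-1)*δ^2)
          = (A/δ^2) * ((t+2*δ)/(t+δ)^2 - (h n)/2) := by
        push_cast
        field_simp
        ring
      rw [e2, abs_mul, abs_of_nonneg (show (0:ℝ) ≤ A/δ^2 by positivity)]
      calc (A/δ^2) * |(t+2*δ)/(t+δ)^2 - (h n)/2| ≤ (A/δ^2) * (10*(h n)^2) :=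
            mul_le_mul_of_nonneg_left key (by positivity)
        _ ≤ (200*B^2+200) * (h n)^2 * A / δ^2 := by
            rw [show (A/δ^2)*(10*(h n)^2) = 10*(h n)^2*A/δ^2 by ring]
            gcongr
            nlinarith [sq_nonneg B, hB1]
  · -- d = 3
    push_cast at hX hhl
    constructor
    · -- part (i), d = 3
      have key : ∀ a : {k : ℤ // -(L n : ℤ) ≤ k ∧ k ≠ (σ : ℤ)},
          0 ≤ (fun k : {k : ℤ // -(L n : ℤ) ≤ k ∧ k ≠ (σ : ℤ)} =>
              ‖(β n).1 + (-1 : ℂ) ^ ((L n : ℤ) + (k : ℤ)) * (β n).2‖ ^ 2 *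
                mult 3 ((L n : ℤ) + (k : ℤ)) /
                  (lam2 3 ((L n : ℤ) + (k : ℤ)) - (h n) ^ (-2 : ℤ)) ^ 2) a ∧
            (fun k : {k : ℤ // -(L n : ℤ) ≤ k ∧ k ≠ (σ : ℤ)} =>
              ‖(β n).1 + (-1 : ℂ) ^ ((L n : ℤ) + (k : ℤ)) * (β n).2‖ ^ 2 *
                mult 3 ((L n : ℤ) + (k : ℤ)) /
                  (lam2 3 ((L n : ℤ) + (k : ℤ)) - (h n) ^ (-2 : ℤ)) ^ 2) a
              ≤ (8*B^2) * (1/(((a : ℤ) : ℝ) - (((σ:ℤ)) : ℝ))^2) := by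
        rintro ⟨k, hk1, hk2⟩
        simp only []
        obtain ⟨hu, hKS2, hks⟩ := hsub k hk1 hk2
        have hgap : lam2 3 ((L n : ℤ) + k) - (h n) ^ (-2 : ℤ)
            = ((k:ℝ) - s n) * (2*(L n : ℝ) + (k:ℝ) + s n + 2) := by
          rw [heq n]; unfold lam2; push_cast; ring
        have hm : mult 3 ((L n : ℤ) + k) = ((L n : ℝ) + (k:ℝ) + 1)^2 := by
          simp only [mult, if_neg (by norm_num : ¬(3=2))]; push_cast; try ring
        rw [hgap, hm]
        constructor
        · positivity
        · exact ptwise3 B _ (L n : ℝ) (k:ℝ) ((σ:ℤ):ℝ) (s n) hB1 (sq_nonneg _)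
            (hnum _) hL2 hu hs0 hs1 hKS2 hks
      obtain ⟨hsumm, htsum⟩ := aux_sum (Subtype.val) Subtype.val_injective (8*B^2)
        (by positivity) (σ:ℤ) _ (fun a => (key a).1) (fun a => (key a).2)
      refine ⟨hsumm, le_trans htsum ?_⟩
      have hexp : ((h n) ^ ((3:ℤ) - ((3:ℕ):ℤ))) = 1 := by norm_num
      rw [hexp]
      nlinarith [sq_nonneg B, hB1]
    · -- part (ii), d = 3
      set A := ‖(β n).1 + (-1 : ℂ) ^ σ * ρ * (β n).2‖ ^ 2 with hAdef
      have hA0 : 0 ≤ A := sq_nonneg _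
      clear_value A
      set δ := ((σ:ℕ) : ℝ) - s n with hδdef
      set w := (L n : ℝ) + (σ:ℝ) + 1 with hwdef
      have hw3 : 3 ≤ w := by rw [hwdef]; linarith
      have hgapσ : lam2 3 ((L n : ℤ) + (σ:ℤ)) - (h n) ^ (-2 : ℤ) = δ * (2*w - δ) := by
        rw [heq n]; unfold lam2; rw [hδdef, hwdef]; push_cast; ring
      have hmσ : mult 3 ((L n : ℤ) + (σ:ℤ)) = w^2 := by
        simp only [mult, if_neg (by norm_num : ¬(3=2))]; rw [hwdef]; push_cast; try ring
      have hwh : 1 ≤ h n * (w + 2) := by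
        calc 1 ≤ h n * ((L n : ℝ) + 3) := hhl
          _ ≤ h n * (w + 2) := by
              apply mul_le_mul_of_nonneg_left _ (le_of_lt hh0)
              rw [hwdef]; linarith
      clear_value δ w
      have key := key3 w δ (h n) hw3 hδ4 hh0 hwh
      have hδa : -(1/4) ≤ δ ∧ δ ≤ 1/4 := abs_le.mp hδ4
      have h2w : 0 < 2*w - δ := by linarith [hδa.2]
      have hexp1 : ((h n) ^ ((3:ℤ) - ((3:ℕ):ℤ))) = 1 := by norm_num
      have hexp2 : ((h n) ^ ((4:ℤ) - ((3:ℕ):ℤ))) = h n := by norm_num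
      rw [hgapσ, hmσ, hexp1, hexp2]
      have hne : (2*w - δ) ≠ 0 := ne_of_gt h2w
      have e2 : A * w^2/(δ*(2*w-δ))^2 - 1 * A/(2*(((3:ℕ):ℝ)-1)*δ^2)
          = (A/δ^2) * (w^2/(2*w-δ)^2 - 1/4) := by
        push_cast
        field_simp
        ring
      rw [e2, abs_mul, abs_of_nonneg (show (0:ℝ) ≤ A/δ^2 by positivity)]
      calc (A/δ^2) * |w^2/(2*w-δ)^2 - 1/4| ≤ (A/δ^2) * (3 * h n) :=
            mul_le_mul_of_nonneg_left key (by positivity)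
        _ ≤ (200*B^2+200) * (h n) * A / δ^2 := by
            rw [show (A/δ^2)*(3 * h n) = 3 * (h n) * A / δ^2 by ring]
            gcongr
            nlinarith [sq_nonneg B, hB1]
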